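/- There exists a unique ỹ > 1/2 such that -ỹ^2 + ỹ·coth(ỹ) - 1/4 = 0, and the function y ↦ -y^2 + y·coth(y) - 1/4 is positive on (0, ỹ) and negative on (ỹ, ∞). -/

import Mathlib

open Real Set

noncomputable def gfun (y : ℝ) : ℝ := -y ^ 2 + y * (Real.cosh y / Real.sinh y) - 1/4

lemma sinh_lt_mul_cosh {t : ℝ} (ht : 0 < t) : Real.sinh t < t * Real.cosh t := by
  have key : StrictMonoOn (fun x : ℝ => x * Real.cosh x - Real.sinh x) (Set.Ici 0) := by
    apply strictMonoOn_of_deriv_pos (convex_Ici 0)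
    · fun_prop
    · intro x hx
      rw [interior_Ici] at hx
      have h : HasDerivAt (fun x : ℝ => x * Real.cosh x - Real.sinh x)
          (1 * Real.cosh x + x * Real.sinh x - Real.cosh x) x :=
        ((hasDerivAt_id x).mul (Real.hasDerivAt_cosh x)).sub (Real.hasDerivAt_sinh x)
      rw [h.deriv]
      have hsx := Real.sinh_pos_iff.mpr hx
      have hx' := Set.mem_Ioi.mp hx
      nlinarith [mul_pos hx' hsx]
  have := key (self_mem_Ici) (le_of_lt ht : (0:ℝ) ≤ t) ht
  simpa using this

lemma gfun_hasDeriv {y : ℝ} (hy : 0 < y) :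
    HasDerivAt gfun (-(2 * y ^ 1) + ((1 * Real.cosh y + y * Real.sinh y) * Real.sinh y
      - y * Real.cosh y * Real.cosh y) / Real.sinh y ^ 2) y := by
  have hs : Real.sinh y ≠ 0 := ne_of_gt (Real.sinh_pos_iff.mpr hy)
  have h1 : HasDerivAt (fun y : ℝ => y * Real.cosh y) (1 * Real.cosh y + y * Real.sinh y) y :=
    (hasDerivAt_id y).mul (Real.hasDerivAt_cosh y)
  have h2 : HasDerivAt (fun y : ℝ => y * Real.cosh y / Real.sinh y)
      (((1 * Real.cosh y + y * Real.sinh y) * Real.sinh y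
        - y * Real.cosh y * Real.cosh y) / Real.sinh y ^ 2) y :=
    h1.div (Real.hasDerivAt_sinh y) hs
  have h3 : HasDerivAt (fun y : ℝ => -y ^ 2) (-(2 * y ^ 1)) y := by
    simpa using (hasDerivAt_pow 2 y).fun_neg
  have := (h3.add h2).sub_const (1/4)
  have e : gfun = fun x => ((fun y : ℝ => -y ^ 2) + fun y : ℝ => y * Real.cosh y / Real.sinh y) x - 1 / 4 := by
    funext z; unfold gfun; simp only [Pi.add_apply]; ring
  rw [e]; exact this

lemma gfun_deriv_neg {y : ℝ} (hy : 0 < y) : deriv gfun y < 0 := by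
  have hs : 0 < Real.sinh y := Real.sinh_pos_iff.mpr hy
  rw [(gfun_hasDeriv hy).deriv]
  have h2y : Real.sinh (2 * y) < 2 * y * Real.cosh (2 * y) :=
    sinh_lt_mul_cosh (by linarith)
  rw [Real.sinh_two_mul, Real.cosh_two_mul] at h2y
  have hcsq : Real.cosh y ^ 2 = Real.sinh y ^ 2 + 1 := Real.cosh_sq y
  have hnum : (1 * Real.cosh y + y * Real.sinh y) * Real.sinh y
      - y * Real.cosh y * Real.cosh y < 2 * y ^ 1 * Real.sinh y ^ 2 := by
    nlinarith
  have := (div_lt_iff₀ (by positivity : (0:ℝ) < Real.sinh y ^ 2)).mpr hnum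
  linarith

lemma gfun_anti : StrictAntiOn gfun (Set.Ioi 0) := by
  apply strictAntiOn_of_deriv_neg (convex_Ioi 0)
  · intro y hy
    exact (gfun_hasDeriv hy).continuousAt.continuousWithinAt
  · intro y hy
    rw [interior_Ioi] at hy
    exact gfun_deriv_neg hy

theorem stmt_5 :
    ∃ yt : ℝ, yt > 1/2 ∧ (-yt ^ 2 + yt * (Real.cosh yt / Real.sinh yt) - 1/4 = 0) ∧
      (∀ y : ℝ, 0 < y → y < yt → 0 < -y ^ 2 + y * (Real.cosh y / Real.sinh y) - 1/4) ∧
      (∀ y : ℝ, yt < y → -y ^ 2 + y * (Real.cosh y / Real.sinh y) - 1/4 < 0) ∧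
      (∀ y' : ℝ, y' > 1/2 → -y' ^ 2 + y' * (Real.cosh y' / Real.sinh y') - 1/4 = 0 → y' = yt) := by
  -- g(1/2) > 0
  have hhalf : (0:ℝ) < gfun (1/2) := by
    have hs : 0 < Real.sinh (1/2 : ℝ) := Real.sinh_pos_iff.mpr (by norm_num)
    have hc : Real.sinh (1/2 : ℝ) < Real.cosh (1/2) := Real.sinh_lt_cosh _
    unfold gfun
    have : (1:ℝ) < Real.cosh (1/2) / Real.sinh (1/2) := (one_lt_div hs).mpr hc
    nlinarith
  -- g(2) < 0
  have h2 : gfun 2 < 0 := by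
    have hs : 0 < Real.sinh (2 : ℝ) := Real.sinh_pos_iff.mpr (by norm_num)
    have hkey : 8 * Real.cosh 2 < 17 * Real.sinh 2 := by
      rw [Real.cosh_eq, Real.sinh_eq]
      have he : Real.exp (-2 : ℝ) = 1 / Real.exp 2 := by
        rw [Real.exp_neg]; ring
      have hexp : (5:ℝ) < Real.exp 2 := by
        have h1 : Real.exp 2 = Real.exp 1 * Real.exp 1 := by
          rw [← Real.exp_add]; norm_num
        nlinarith [Real.exp_one_gt_d9]
      have hpos := Real.exp_pos (2:ℝ)
      rw [he]
      have h9 : 0 < 9 * Real.exp 2 ^ 2 - 25 := by nlinarith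
      have : 17 * ((Real.exp 2 - 1 / Real.exp 2) / 2) - 8 * ((Real.exp 2 + 1 / Real.exp 2) / 2)
          = (9 * Real.exp 2 ^ 2 - 25) / (2 * Real.exp 2) := by field_simp; ring
      rw [← sub_pos, this]
      positivity
    unfold gfun
    have hcd : Real.cosh 2 / Real.sinh 2 < 17/8 := by
      rw [div_lt_div_iff₀ hs (by norm_num : (0:ℝ) < 8)] at *
      linarith
    nlinarith
  have hcont : ContinuousOn gfun (Set.Icc (1/2 : ℝ) 2) := by
    intro y hy
    exact (gfun_hasDeriv (by cases hy with | intro a b => linarith)).continuousAt.continuousWithinAt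
  obtain ⟨yt, hyt, hgyt⟩ : ∃ yt ∈ Set.Ioo (1/2 : ℝ) 2, gfun yt = 0 := by
    have := intermediate_value_Ioo' (by norm_num : (1/2:ℝ) ≤ 2) hcont
    have h0 : (0:ℝ) ∈ Set.Ioo (gfun 2) (gfun (1/2)) := ⟨h2, hhalf⟩
    obtain ⟨yt, hm, he⟩ := this h0
    exact ⟨yt, hm, he⟩
  refine ⟨yt, hyt.1, hgyt, ?_, ?_, ?_⟩
  · intro y hy hylt
    have := gfun_anti (Set.mem_Ioi.mpr hy) (Set.mem_Ioi.mpr (by linarith [hyt.1] : (0:ℝ) < yt)) hylt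
    rw [hgyt] at this
    exact this
  · intro y hy
    have hyt0 : (0:ℝ) < yt := by linarith [hyt.1]
    have := gfun_anti (Set.mem_Ioi.mpr hyt0) (Set.mem_Ioi.mpr (by linarith)) hy
    rw [hgyt] at this
    exact this
  · intro y' hy' hgy'
    have hyt0 : (0:ℝ) < yt := by linarith [hyt.1]
    have := gfun_anti.injOn (Set.mem_Ioi.mpr (by linarith : (0:ℝ) < y'))
      (Set.mem_Ioi.mpr hyt0)
    apply this
    show gfun y' = gfun yt
    rw [hgyt]
    exact hgy'
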